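/- arXiv:math/0608695 — 2 statements merged into one kernel-verified Lean document; each statement's English description precedes it below -/
import Mathlib

section
/- Suppose the relative equations of motion hold: m V̇ + m Ω₂ × V = -∂U/∂X, d/dt(J_R Ω) + Ω₂ × (J_R Ω) = -M, J₂ Ω̇₂ + Ω₂ × J₂Ω₂ = X × ∂U/∂X + M, together with the kinematic equations Ẋ + Ω₂ × X = V and Ṙ = S(Ω)R - S(Ω₂)R, where U = U(X,R) and S(M) = (∂U/∂R)Rᵀ - R(∂U/∂R)ᵀ. Then the total energy E = (1/2)m‖V‖² + (1/2)⟨J_R Ω, Ω⟩ + (1/2)⟨J₂Ω₂, Ω₂⟩ + U(X,R) is constant along solutions. -/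
open Matrix

/-- The cross-product (hat) operator matrix `S(x)`. -/
def hat (x : Fin 3 → ℝ) : Matrix (Fin 3) (Fin 3) ℝ :=
  !![0, -x 2, x 1; x 2, 0, -x 0; -x 1, x 0, 0]

/-- Reinterpret a plain vector in `Fin 3 → ℝ` as an element of Euclidean 3-space. -/
def toE (x : Fin 3 → ℝ) : EuclideanSpace ℝ (Fin 3) := WithLp.toLp 2 x

lemma toE_inner (a b : Fin 3 → ℝ) : (inner ℝ (toE a) (toE b) : ℝ) = a ⬝ᵥ b := by
  simp [toE, PiLp.inner_apply, dotProduct, RCLike.inner_apply, mul_comm]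

lemma toE_norm_sq (a : Fin 3 → ℝ) : ‖toE a‖ ^ 2 = a ⬝ᵥ a := by
  rw [← real_inner_self_eq_norm_sq, toE_inner]

lemma hasDerivAt_dot (a b : ℝ → Fin 3 → ℝ) (a' b' : Fin 3 → ℝ) (t : ℝ)
    (ha : ∀ i, HasDerivAt (fun s => a s i) (a' i) t)
    (hb : ∀ i, HasDerivAt (fun s => b s i) (b' i) t) :
    HasDerivAt (fun s => a s ⬝ᵥ b s) (a' ⬝ᵥ b t + a t ⬝ᵥ b') t := by
  have : HasDerivAt (fun s => ∑ i, a s i * b s i)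
      (∑ i : Fin 3, (a' i * b t i + a t i * b' i)) t :=
    HasDerivAt.fun_sum fun i _ => (ha i).mul (hb i)
  simpa [dotProduct, Finset.sum_add_distrib] using this

lemma hat_mulVec (w u : Fin 3 → ℝ) : hat w *ᵥ u = w ⨯₃ u := by
  funext i
  fin_cases i <;>
    simp [hat, Matrix.mulVec, dotProduct, Fin.sum_univ_three, cross_apply] <;> ring

lemma hat_transpose (w : Fin 3 → ℝ) : (hat w)ᵀ = -(hat w) := by
  ext i j
  fin_cases i <;> fin_cases j <;> simp [hat]

lemma dot_mulVec (A : Matrix (Fin 3) (Fin 3) ℝ) (x y : Fin 3 → ℝ) :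
    x ⬝ᵥ (A *ᵥ y) = (Aᵀ *ᵥ x) ⬝ᵥ y := by
  simp [Matrix.mulVec, dotProduct, Fin.sum_univ_three, Matrix.transpose_apply]
  ring

lemma mulVec_dot (A : Matrix (Fin 3) (Fin 3) ℝ) (x y : Fin 3 → ℝ) :
    (A *ᵥ x) ⬝ᵥ y = x ⬝ᵥ (Aᵀ *ᵥ y) := by
  simp [Matrix.mulVec, dotProduct, Fin.sum_univ_three, Matrix.transpose_apply]
  ring

theorem total_energy_conserved
    (m : ℝ) (hm : 0 < m) (J₁ J₂ : Matrix (Fin 3) (Fin 3) ℝ)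
    (hJ₁ : J₁.PosDef) (hJ₁s : J₁.transpose = J₁)
    (hJ₂ : J₂.PosDef) (hJ₂s : J₂.transpose = J₂)
    (X V Ω Ω₂ X' V' Ω' Ω₂' P P' M UX : ℝ → Fin 3 → ℝ)
    (R R' UR : ℝ → Matrix (Fin 3) (Fin 3) ℝ) (Ufun : ℝ → ℝ)
    (hSO : ∀ t, R t * (R t).transpose = 1 ∧ (R t).det = 1)
    (hXd : ∀ t i, HasDerivAt (fun s => X s i) (X' t i) t)
    (hVd : ∀ t i, HasDerivAt (fun s => V s i) (V' t i) t)
    (hΩd : ∀ t i, HasDerivAt (fun s => Ω s i) (Ω' t i) t)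
    (hΩ₂d : ∀ t i, HasDerivAt (fun s => Ω₂ s i) (Ω₂' t i) t)
    (hPd : ∀ t i, HasDerivAt (fun s => P s i) (P' t i) t)
    (hRd : ∀ t i j, HasDerivAt (fun s => R s i j) (R' t i j) t)
    (hP : ∀ t, P t = (R t * J₁ * (R t).transpose).mulVec (Ω t))
    (eom1 : ∀ t, m • V' t + m • (Ω₂ t ⨯₃ V t) = -UX t)
    (eom2 : ∀ t, P' t + Ω₂ t ⨯₃ P t = -M t)
    (eom3 : ∀ t, J₂.mulVec (Ω₂' t) + Ω₂ t ⨯₃ (J₂.mulVec (Ω₂ t))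
              = X t ⨯₃ UX t + M t)
    (kin1 : ∀ t, X' t + Ω₂ t ⨯₃ X t = V t)
    (kin2 : ∀ t, R' t = hat (Ω t) * R t - hat (Ω₂ t) * R t)
    (hM : ∀ t, hat (M t) = UR t * (R t).transpose - R t * (UR t).transpose)
    (chain : ∀ t, HasDerivAt Ufun
      ((inner ℝ (toE (UX t)) (toE (X' t)) : ℝ) + ∑ i, ∑ j, UR t i j * R' t i j) t) :
    ∀ t₁ t₂ : ℝ,
      ((1 / 2) * m * ‖toE (V t₁)‖ ^ 2
        + (1 / 2) * (inner ℝ (toE (P t₁)) (toE (Ω t₁)) : ℝ)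
        + (1 / 2) * (inner ℝ (toE (J₂.mulVec (Ω₂ t₁))) (toE (Ω₂ t₁)) : ℝ)
        + Ufun t₁)
      = ((1 / 2) * m * ‖toE (V t₂)‖ ^ 2
        + (1 / 2) * (inner ℝ (toE (P t₂)) (toE (Ω t₂)) : ℝ)
        + (1 / 2) * (inner ℝ (toE (J₂.mulVec (Ω₂ t₂))) (toE (Ω₂ t₂)) : ℝ)
        + Ufun t₂) := by
  intro t₁ t₂
  set E : ℝ → ℝ := fun t => (1 / 2 * m) * (V t ⬝ᵥ V t) + (1 / 2) * (P t ⬝ᵥ Ω t)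
      + (1 / 2) * ((J₂ *ᵥ Ω₂ t) ⬝ᵥ Ω₂ t) + Ufun t with hE
  have key : ∀ t, HasDerivAt E 0 t := by
    intro t
    -- derivative of the moving inertia tensor entries
    have hA : ∀ i j, HasDerivAt (fun s => (R s * J₁ * (R s)ᵀ) i j)
        ((R' t * J₁ * (R t)ᵀ + R t * J₁ * (R' t)ᵀ) i j) t := by
      intro i j
      have h1 : (fun s => (R s * J₁ * (R s)ᵀ) i j)
          = fun s => ∑ l, ∑ k, R s i k * J₁ k l * R s j l := by
        funext s
        simp [Matrix.mul_apply, Matrix.transpose_apply, Finset.sum_mul, Fin.sum_univ_three]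
        ring
      have h2 : HasDerivAt (fun s => ∑ l, ∑ k, R s i k * J₁ k l * R s j l)
          (∑ l : Fin 3, ∑ k : Fin 3,
            (R' t i k * J₁ k l * R t j l + R t i k * J₁ k l * R' t j l)) t :=
        HasDerivAt.fun_sum fun l _ => HasDerivAt.fun_sum fun k _ =>
          ((hRd t i k).mul_const (J₁ k l)).mul (hRd t j l)
      rw [h1]
      convert h2 using 1
      simp [Matrix.mul_apply, Matrix.transpose_apply, Matrix.add_apply,
        Fin.sum_univ_three]
      ring
    -- derivative of P in closed form
    have hPder : ∀ i, HasDerivAt (fun s => P s i)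
        (((R' t * J₁ * (R t)ᵀ + R t * J₁ * (R' t)ᵀ) *ᵥ Ω t
          + (R t * J₁ * (R t)ᵀ) *ᵥ Ω' t) i) t := by
      intro i
      have hfun : (fun s => P s i)
          = fun s => ∑ j, (R s * J₁ * (R s)ᵀ) i j * Ω s j := by
        funext s; rw [hP s]; simp [Matrix.mulVec, dotProduct]
      rw [hfun]
      have h2 : HasDerivAt (fun s => ∑ j, (R s * J₁ * (R s)ᵀ) i j * Ω s j)
          (∑ j : Fin 3, ((R' t * J₁ * (R t)ᵀ + R t * J₁ * (R' t)ᵀ) i j * Ω t j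
            + (R t * J₁ * (R t)ᵀ) i j * Ω' t j)) t :=
        HasDerivAt.fun_sum fun j _ => (hA i j).mul (hΩd t j)
      convert h2 using 1
      simp [Matrix.mulVec, dotProduct, Pi.add_apply, Finset.sum_add_distrib]
    have hP' : P' t = (R' t * J₁ * (R t)ᵀ + R t * J₁ * (R' t)ᵀ) *ᵥ Ω t
          + (R t * J₁ * (R t)ᵀ) *ᵥ Ω' t := by
      funext i; exact (hPd t i).unique (hPder i)
    -- the four pieces of the energy derivative
    have hDV := hasDerivAt_dot V V (V' t) (V' t) t (hVd t) (hVd t)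
    have hDP := hasDerivAt_dot P Ω (P' t) (Ω' t) t (hPd t) (hΩd t)
    have hJΩ : ∀ i, HasDerivAt (fun s => (J₂ *ᵥ Ω₂ s) i) ((J₂ *ᵥ Ω₂' t) i) t := by
      intro i
      have h2 : HasDerivAt (fun s => ∑ j, J₂ i j * Ω₂ s j) (∑ j : Fin 3, J₂ i j * Ω₂' t j) t :=
        HasDerivAt.fun_sum fun j _ => (hΩ₂d t j).const_mul (J₂ i j)
      simpa [Matrix.mulVec, dotProduct] using h2
    have hDJ := hasDerivAt_dot (fun s => J₂ *ᵥ Ω₂ s) Ω₂ (J₂ *ᵥ Ω₂' t) (Ω₂' t) t hJΩ (hΩ₂d t)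
    have hDU := chain t
    rw [toE_inner] at hDU
    have hsum := (((hDV.const_mul ((1:ℝ) / 2 * m)).add (hDP.const_mul ((1:ℝ) / 2))).add
      (hDJ.const_mul ((1:ℝ) / 2))).add hDU
    have hzero :
        1 / 2 * m * (V' t ⬝ᵥ V t + V t ⬝ᵥ V' t)
          + 1 / 2 * (P' t ⬝ᵥ Ω t + P t ⬝ᵥ Ω' t)
          + 1 / 2 * ((J₂ *ᵥ Ω₂' t) ⬝ᵥ Ω₂ t + (J₂ *ᵥ Ω₂ t) ⬝ᵥ Ω₂' t)
          + (UX t ⬝ᵥ X' t + ∑ i, ∑ j, UR t i j * R' t i j) = 0 := by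
      -- translational part
      have hcV : (Ω₂ t ⨯₃ V t) ⬝ᵥ V t = 0 := by
        rw [dotProduct_comm]; exact dot_cross_self _ _
      have e1 : m * (V' t ⬝ᵥ V t) = -(UX t ⬝ᵥ V t) := by
        have h := congrArg (· ⬝ᵥ V t) (eom1 t)
        simp only [add_dotProduct, smul_dotProduct, neg_dotProduct, smul_eq_mul, hcV,
          mul_zero, add_zero] at h
        exact h
      -- rotational part
      have hA' : R' t * J₁ * (R t)ᵀ + R t * J₁ * (R' t)ᵀ
          = (hat (Ω t) - hat (Ω₂ t)) * (R t * J₁ * (R t)ᵀ)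
            - (R t * J₁ * (R t)ᵀ) * (hat (Ω t) - hat (Ω₂ t)) := by
        have hS : R' t = (hat (Ω t) - hat (Ω₂ t)) * R t := by
          rw [kin2 t, Matrix.sub_mul]
        rw [hS, Matrix.transpose_mul, Matrix.transpose_sub, hat_transpose, hat_transpose]
        noncomm_ring
      have hAsymm : (R t * J₁ * (R t)ᵀ)ᵀ = R t * J₁ * (R t)ᵀ := by
        rw [Matrix.transpose_mul, Matrix.transpose_mul, Matrix.transpose_transpose, hJ₁s,
          Matrix.mul_assoc]
      have hSΩ : (hat (Ω t) - hat (Ω₂ t)) *ᵥ Ω t = -(Ω₂ t ⨯₃ Ω t) := by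
        rw [Matrix.sub_mulVec, hat_mulVec, hat_mulVec, cross_self]
        simp
      have hSP : Ω t ⬝ᵥ ((hat (Ω t) - hat (Ω₂ t)) *ᵥ P t) = -(Ω t ⬝ᵥ (Ω₂ t ⨯₃ P t)) := by
        rw [Matrix.sub_mulVec, hat_mulVec, hat_mulVec, dotProduct_sub, dot_self_cross]
        ring
      have htriple : Ω t ⬝ᵥ (Ω₂ t ⨯₃ P t) = -(P t ⬝ᵥ (Ω₂ t ⨯₃ Ω t)) := by
        rw [triple_product_permutation, triple_product_permutation (Ω₂ t)]
        rw [← cross_anticomm, dotProduct_neg]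
      have ePΩ' : P t ⬝ᵥ Ω' t = P' t ⬝ᵥ Ω t - 2 * (P t ⬝ᵥ (Ω₂ t ⨯₃ Ω t)) := by
        have h1 : P t ⬝ᵥ Ω' t = Ω t ⬝ᵥ ((R t * J₁ * (R t)ᵀ) *ᵥ Ω' t) := by
          rw [hP t, mulVec_dot, hAsymm]
        have h2 : (R t * J₁ * (R t)ᵀ) *ᵥ Ω' t
            = P' t - ((hat (Ω t) - hat (Ω₂ t)) * (R t * J₁ * (R t)ᵀ)) *ᵥ Ω t
              + ((R t * J₁ * (R t)ᵀ) * (hat (Ω t) - hat (Ω₂ t))) *ᵥ Ω t := by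
          rw [hP', hA']
          rw [Matrix.sub_mulVec]
          abel
        have h3 : Ω t ⬝ᵥ (((hat (Ω t) - hat (Ω₂ t)) * (R t * J₁ * (R t)ᵀ)) *ᵥ Ω t)
            = -(Ω t ⬝ᵥ (Ω₂ t ⨯₃ P t)) := by
          rw [← Matrix.mulVec_mulVec, ← hP t, hSP]
        have h4 : Ω t ⬝ᵥ (((R t * J₁ * (R t)ᵀ) * (hat (Ω t) - hat (Ω₂ t))) *ᵥ Ω t)
            = -(P t ⬝ᵥ (Ω₂ t ⨯₃ Ω t)) := by
          rw [← Matrix.mulVec_mulVec, hSΩ, Matrix.mulVec_neg, dotProduct_neg, dot_mulVec,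
            hAsymm, ← hP t]
        have h5 : Ω t ⬝ᵥ P' t = P' t ⬝ᵥ Ω t := dotProduct_comm _ _
        rw [h1, h2]
        rw [dotProduct_add, dotProduct_sub, h3, h4, h5, htriple]
        ring
      have eP' : P' t ⬝ᵥ Ω t = -(M t ⬝ᵥ Ω t) + P t ⬝ᵥ (Ω₂ t ⨯₃ Ω t) := by
        have h := congrArg (· ⬝ᵥ Ω t) (eom2 t)
        simp only [add_dotProduct, neg_dotProduct] at h
        have h6 : (Ω₂ t ⨯₃ P t) ⬝ᵥ Ω t = -(P t ⬝ᵥ (Ω₂ t ⨯₃ Ω t)) := by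
          rw [dotProduct_comm]; exact htriple
        linarith [h, h6]
      -- J₂ part
      have e3 : (J₂ *ᵥ Ω₂' t) ⬝ᵥ Ω₂ t = (X t ⨯₃ UX t) ⬝ᵥ Ω₂ t + M t ⬝ᵥ Ω₂ t := by
        have h := congrArg (· ⬝ᵥ Ω₂ t) (eom3 t)
        have hc : (Ω₂ t ⨯₃ (J₂ *ᵥ Ω₂ t)) ⬝ᵥ Ω₂ t = 0 := by
          rw [dotProduct_comm]; exact dot_self_cross _ _
        simp only [add_dotProduct, hc, add_zero] at h
        exact h
      have e3' : (J₂ *ᵥ Ω₂ t) ⬝ᵥ Ω₂' t = (J₂ *ᵥ Ω₂' t) ⬝ᵥ Ω₂ t := by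
        rw [mulVec_dot, hJ₂s, dotProduct_comm]
      -- potential part
      have e4 : UX t ⬝ᵥ X' t = UX t ⬝ᵥ V t - (X t ⨯₃ UX t) ⬝ᵥ Ω₂ t := by
        have h : X' t = V t - Ω₂ t ⨯₃ X t := by
          rw [← kin1 t]; abel
        rw [h, dotProduct_sub]
        have h7 : UX t ⬝ᵥ (Ω₂ t ⨯₃ X t) = (X t ⨯₃ UX t) ⬝ᵥ Ω₂ t := by
          rw [triple_product_permutation, dotProduct_comm]
        rw [h7]
      -- torque work identity
      have e5 : (∑ i, ∑ j, UR t i j * R' t i j) = M t ⬝ᵥ Ω t - M t ⬝ᵥ Ω₂ t := by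
        have em0 := congrFun (congrFun (hM t) 2) 1
        have em1 := congrFun (congrFun (hM t) 0) 2
        have em2 := congrFun (congrFun (hM t) 1) 0
        simp only [hat, Matrix.of_apply, Matrix.cons_val', Matrix.cons_val_zero,
          Matrix.cons_val_one, Matrix.head_cons, Matrix.empty_val', Matrix.cons_val_fin_one,
          Matrix.cons_val_two, Matrix.tail_cons, Matrix.head_fin_const, Matrix.sub_apply,
          Matrix.mul_apply, Matrix.transpose_apply, Fin.sum_univ_three] at em0 em1 em2
        rw [kin2 t]
        simp only [hat, Matrix.of_apply, Matrix.cons_val', Matrix.cons_val_zero,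
          Matrix.cons_val_one, Matrix.head_cons, Matrix.empty_val', Matrix.cons_val_fin_one,
          Matrix.cons_val_two, Matrix.tail_cons, Matrix.head_fin_const, Matrix.sub_apply,
          Matrix.mul_apply, Matrix.transpose_apply, Fin.sum_univ_three, dotProduct]
        linear_combination (Ω₂ t 0 - Ω t 0) * em0 + (Ω₂ t 1 - Ω t 1) * em1
          + (Ω₂ t 2 - Ω t 2) * em2
      have ec1 : V t ⬝ᵥ V' t = V' t ⬝ᵥ V t := dotProduct_comm _ _
      linear_combination ec1 * (1 / 2 * m) + e1 + (1 / 2) * ePΩ' + eP' + e3 + (1 / 2) * e3'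
        + e4 + e5
    beta_reduce at hsum
    rw [hzero] at hsum
    exact hsum
  have hconst : E t₁ = E t₂ :=
    is_const_of_deriv_eq_zero (fun t => (key t).differentiableAt)
      (fun t => (key t).deriv) t₁ t₂
  have hrw : ∀ t : ℝ, (1 / 2) * m * ‖toE (V t)‖ ^ 2
        + (1 / 2) * (inner ℝ (toE (P t)) (toE (Ω t)) : ℝ)
        + (1 / 2) * (inner ℝ (toE (J₂.mulVec (Ω₂ t))) (toE (Ω₂ t)) : ℝ)
        + Ufun t = E t := by
    intro t
    rw [hE]
    rw [toE_norm_sq, toE_inner, toE_inner]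
  rw [hrw t₁, hrw t₂, hconst]
end

section
/- Let J ∈ ℝ^{3×3} be symmetric and define J_d = (1/2)tr(J)I - J. If F = exp(S(θ)) is given by the Rodrigues formula for θ ∈ ℝ³, then F J_d - J_d Fᵀ = S(g(θ)) where g(θ) = sin‖θ‖/‖θ‖ · Jθ + (1-cos‖θ‖)/‖θ‖² · θ × Jθ, i.e. the implicit LGVI equation hS(p) = FJ_d - J_dFᵀ is equivalent to the vector equation hp = g(θ). -/
open Matrix

lemma hat_smul (h : ℝ) (p : Fin 3 → ℝ) : h • hat p = hat (h • p) := by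
  ext i j; fin_cases i <;> fin_cases j <;> simp [hat] <;> ring

lemma hat_inj {x y : Fin 3 → ℝ} (hxy : hat x = hat y) : x = y := by
  funext i
  fin_cases i
  · have := congrFun (congrFun hxy 1) 2; simpa [hat] using this
  · have := congrFun (congrFun hxy 0) 2; simpa [hat] using this
  · have := congrFun (congrFun hxy 1) 0; simpa [hat] using this

set_option maxHeartbeats 1000000 in
lemma key (J : Matrix (Fin 3) (Fin 3) ℝ) (hJ : J.transpose = J) (θ : Fin 3 → ℝ) (a b : ℝ)
    (Jd : Matrix (Fin 3) (Fin 3) ℝ)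
    (hJd : Jd = (((1 : ℝ) / 2) * J.trace) • (1 : Matrix (Fin 3) (Fin 3) ℝ) - J) :
    (1 + a • hat θ + b • (hat θ * hat θ)) * Jd
      - Jd * (1 + a • hat θ + b • (hat θ * hat θ)).transpose
      = hat (a • J.mulVec θ + b • (θ ⨯₃ J.mulVec θ)) := by
  have h01 : J 0 1 = J 1 0 := by simpa using congrFun (congrFun hJ 1) 0
  have h02 : J 0 2 = J 2 0 := by simpa using congrFun (congrFun hJ 2) 0
  have h12 : J 1 2 = J 2 1 := by simpa using congrFun (congrFun hJ 2) 1
  subst hJd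
  ext i j
  fin_cases i <;> fin_cases j <;>
    simp [hat, Matrix.vecHead, Matrix.vecTail, Matrix.transpose_apply, Matrix.mul_apply,
      Matrix.mulVec, Matrix.trace, crossProduct,
      Fin.sum_univ_three, Matrix.one_apply, dotProduct, h01, h02, h12] <;> ring

theorem lgvi_implicit_vector_form
    (J : Matrix (Fin 3) (Fin 3) ℝ) (hJ : J.transpose = J)
    (Jd : Matrix (Fin 3) (Fin 3) ℝ) (hJd : Jd = (((1 : ℝ) / 2) * J.trace) • (1 : Matrix (Fin 3) (Fin 3) ℝ) - J)
    (θ : Fin 3 → ℝ) (hθ : θ ≠ 0)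
    (F : Matrix (Fin 3) (Fin 3) ℝ)
    (hF : F = 1 + (Real.sin ‖toE θ‖ / ‖toE θ‖) • hat θ
            + ((1 - Real.cos ‖toE θ‖) / ‖toE θ‖ ^ 2) • (hat θ * hat θ))
    (g : Fin 3 → ℝ)
    (hg : g = (Real.sin ‖toE θ‖ / ‖toE θ‖) • J.mulVec θ
            + ((1 - Real.cos ‖toE θ‖) / ‖toE θ‖ ^ 2) • (θ ⨯₃ J.mulVec θ)) :
    F * Jd - Jd * F.transpose = hat g ∧
    ∀ (h : ℝ) (p : Fin 3 → ℝ),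
      (h • hat p = F * Jd - Jd * F.transpose ↔ h • p = g) := by
  have hmain : F * Jd - Jd * F.transpose = hat g := by
    rw [hF, hg, key J hJ θ _ _ Jd hJd]
  refine ⟨hmain, fun h p => ?_⟩
  rw [hmain, hat_smul]
  exact ⟨fun hh => hat_inj hh, fun hh => by rw [hh]⟩
end
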